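/- Let n ≥ 4 be an integer, let S_1, …, S_{n-3} be subsets of {1,…,n}, and for each j let i_j be a chosen element of S_j. If S_1, …, S_{n-3} satisfies the Cerberus condition, then there exist subsets S_1', …, S_{n-3}' such that for every j one has i_j ∈ S_j' ⊆ S_j and |S_j'| = 4, and S_1', …, S_{n-3}' also satisfies the Cerberus condition. -/

import Mathlib

/-- A collection `S : Fin (n-3) → Finset (Fin n)` satisfies the Cerberus condition if
`|⋃_{j ∈ J} S j| ≥ |J| + 3` for every nonempty `J`. -/
def CerberusCondition {n : ℕ} (S : Fin (n - 3) → Finset (Fin n)) : Prop :=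
  ∀ J : Finset (Fin (n - 3)), J.Nonempty → J.card + 3 ≤ (J.biUnion S).card

lemma cerberus_mono {n : ℕ} {A B : Fin (n - 3) → Finset (Fin n)}
    (hAB : ∀ j, A j ⊆ B j) (hC : CerberusCondition A) : CerberusCondition B := by
  intro J hJ
  refine (hC J hJ).trans (Finset.card_le_card ?_)
  intro a ha
  rw [Finset.mem_biUnion] at ha ⊢
  obtain ⟨k, hk, hak⟩ := ha
  exact ⟨k, hk, hAB k hak⟩

lemma tight_inter {n : ℕ} {S : Fin (n - 3) → Finset (Fin n)} (hC : CerberusCondition S)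
    {A B : Finset (Fin (n - 3))} (hA : (A.biUnion S).card = A.card + 3)
    (hB : (B.biUnion S).card = B.card + 3) (hAB : (A ∩ B).Nonempty) :
    ((A ∩ B).biUnion S).card = (A ∩ B).card + 3 := by
  have h1 : (A ∪ B).biUnion S = A.biUnion S ∪ B.biUnion S := by
    ext a
    simp only [Finset.mem_biUnion, Finset.mem_union]
    constructor
    · rintro ⟨k, hk | hk, hak⟩
      · exact Or.inl ⟨k, hk, hak⟩
      · exact Or.inr ⟨k, hk, hak⟩
    · rintro (⟨k, hk, hak⟩ | ⟨k, hk, hak⟩)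
      · exact ⟨k, Or.inl hk, hak⟩
      · exact ⟨k, Or.inr hk, hak⟩
  have h2 : (A ∩ B).biUnion S ⊆ A.biUnion S ∩ B.biUnion S := by
    intro a ha
    rw [Finset.mem_biUnion] at ha
    obtain ⟨k, hk, hak⟩ := ha
    rw [Finset.mem_inter] at hk
    rw [Finset.mem_inter]
    exact ⟨Finset.mem_biUnion.2 ⟨k, hk.1, hak⟩, Finset.mem_biUnion.2 ⟨k, hk.2, hak⟩⟩
  have h2' : ((A ∩ B).biUnion S).card ≤ (A.biUnion S ∩ B.biUnion S).card :=
    Finset.card_le_card h2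
  have h3 : (A ∪ B).card + 3 ≤ ((A ∪ B).biUnion S).card :=
    hC _ (hAB.mono (Finset.inter_subset_left.trans Finset.subset_union_left))
  have h4 : (A ∩ B).card + 3 ≤ ((A ∩ B).biUnion S).card := hC _ hAB
  have h5 : (A.biUnion S ∩ B.biUnion S).card + (A.biUnion S ∪ B.biUnion S).card
      = (A.biUnion S).card + (B.biUnion S).card := Finset.card_inter_add_card_union _ _
  have h6 : (A ∩ B).card + (A ∪ B).card = A.card + B.card :=
    Finset.card_inter_add_card_union _ _
  rw [h1] at h3
  omega

lemma exists_removable {n : ℕ} (S : Fin (n - 3) → Finset (Fin n)) (i : Fin (n - 3) → Fin n)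
    (hi : ∀ j, i j ∈ S j) (hC : CerberusCondition S) (j₀ : Fin (n - 3))
    (h5 : 5 ≤ (S j₀).card) :
    ∃ x ∈ (S j₀).erase (i j₀),
      CerberusCondition (Function.update S j₀ ((S j₀).erase x)) := by
  by_contra hcon
  push_neg at hcon
  have hwit : ∀ x ∈ (S j₀).erase (i j₀), ∃ J : Finset (Fin (n - 3)),
      j₀ ∈ J ∧ (J.biUnion S).card = J.card + 3 ∧ ∀ k ∈ J.erase j₀, x ∉ S k := by
    intro x hx
    have hfail := hcon x hx
    unfold CerberusCondition at hfail
    push_neg at hfail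
    obtain ⟨J, hJne, hlt⟩ := hfail
    set S' := Function.update S j₀ ((S j₀).erase x) with hS'
    have hj₀J : j₀ ∈ J := by
      by_contra hj
      have heq : J.biUnion S' = J.biUnion S := by
        apply Finset.biUnion_congr rfl
        intro k hk
        have : k ≠ j₀ := by rintro rfl; exact hj hk
        simp [hS', Function.update_of_ne this]
      rw [heq] at hlt
      exact absurd (hC J hJne) (by omega)
    have hsub : J.biUnion S' ⊆ J.biUnion S := by
      intro a ha
      rw [Finset.mem_biUnion] at ha ⊢
      obtain ⟨k, hk, hak⟩ := ha
      refine ⟨k, hk, ?_⟩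
      by_cases hkj : k = j₀
      · subst hkj
        simp only [hS', Function.update_self] at hak
        exact Finset.mem_of_mem_erase hak
      · rwa [hS', Function.update_of_ne hkj] at hak
    have hsub2 : J.biUnion S ⊆ insert x (J.biUnion S') := by
      intro a ha
      rw [Finset.mem_biUnion] at ha
      obtain ⟨k, hk, hak⟩ := ha
      by_cases hax : a = x
      · rw [hax]; exact Finset.mem_insert_self _ _
      · apply Finset.mem_insert_of_mem
        rw [Finset.mem_biUnion]
        refine ⟨k, hk, ?_⟩
        by_cases hkj : k = j₀
        · subst hkj
          simp only [hS', Function.update_self]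
          exact Finset.mem_erase.2 ⟨hax, hak⟩
        · rwa [hS', Function.update_of_ne hkj]
    have hcard2 : (J.biUnion S).card ≤ (J.biUnion S').card + 1 :=
      (Finset.card_le_card hsub2).trans (Finset.card_insert_le _ _)
    have hCJ := hC J hJne
    have heq3 : (J.biUnion S).card = J.card + 3 := by omega
    have hxnot : x ∉ J.biUnion S' := by
      intro hxmem
      have : J.biUnion S ⊆ J.biUnion S' := by
        intro a ha
        rcases Finset.mem_insert.1 (hsub2 ha) with h | h
        · rwa [h]
        · exact h
      have := Finset.card_le_card this
      omega
    refine ⟨J, hj₀J, heq3, ?_⟩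
    intro k hk hxk
    rw [Finset.mem_erase] at hk
    apply hxnot
    rw [Finset.mem_biUnion]
    refine ⟨k, hk.2, ?_⟩
    rw [hS', Function.update_of_ne hk.1]
    exact hxk
  -- the erase set is nonempty
  have hE : 4 ≤ ((S j₀).erase (i j₀)).card := by
    rw [Finset.card_erase_of_mem (hi j₀)]; omega
  obtain ⟨x₀, hx₀⟩ := Finset.card_pos.1 (by omega : 0 < ((S j₀).erase (i j₀)).card)
  obtain ⟨J₀, hJ₀j, hJ₀t, _⟩ := hwit x₀ hx₀
  -- collection of tight sets containing j₀
  set T : Finset (Finset (Fin (n - 3))) :=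
    Finset.univ.powerset.filter (fun J => j₀ ∈ J ∧ (J.biUnion S).card = J.card + 3) with hT
  have hJ₀T : J₀ ∈ T := by
    simp only [hT, Finset.mem_filter, Finset.mem_powerset]
    exact ⟨Finset.subset_univ _, hJ₀j, hJ₀t⟩
  obtain ⟨M, hMT, hMmin⟩ := Finset.exists_min_image T Finset.card ⟨J₀, hJ₀T⟩
  simp only [hT, Finset.mem_filter, Finset.mem_powerset] at hMT
  obtain ⟨-, hj₀M, hMt⟩ := hMT
  have key : ∀ x ∈ (S j₀).erase (i j₀), ∀ k ∈ M.erase j₀, x ∉ S k := by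
    intro x hx k hk
    obtain ⟨J, hjJ, hJt, hJun⟩ := hwit x hx
    have hint : (M ∩ J).Nonempty := ⟨j₀, Finset.mem_inter.2 ⟨hj₀M, hjJ⟩⟩
    have htight := tight_inter hC hMt hJt hint
    have hmemT : M ∩ J ∈ T := by
      simp only [hT, Finset.mem_filter, Finset.mem_powerset]
      exact ⟨Finset.subset_univ _, Finset.mem_inter.2 ⟨hj₀M, hjJ⟩, htight⟩
    have hle := hMmin _ hmemT
    have hMeq : M ∩ J = M :=
      Finset.eq_of_subset_of_card_le Finset.inter_subset_left hle
    have hMJ : M ⊆ J := by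
      intro m hm
      rw [← hMeq] at hm
      exact (Finset.mem_inter.1 hm).2
    rw [Finset.mem_erase] at hk
    exact hJun k (Finset.mem_erase.2 ⟨hk.1, hMJ hk.2⟩)
  by_cases hM1 : M.erase j₀ = ∅
  · have hMsing : M = {j₀} := by
      rcases (Finset.erase_eq_empty_iff M j₀).1 hM1 with h | h
      · exact absurd hj₀M (h ▸ Finset.notMem_empty j₀)
      · exact h
    rw [hMsing] at hMt
    simp only [Finset.singleton_biUnion, Finset.card_singleton] at hMt
    omega
  · have hne : (M.erase j₀).Nonempty := Finset.nonempty_iff_ne_empty.2 hM1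
    have h1 := hC (M.erase j₀) hne
    rw [Finset.card_erase_of_mem hj₀M] at h1
    have hMcard : 1 ≤ M.card := Finset.card_pos.2 ⟨j₀, hj₀M⟩
    set E := (S j₀).erase (i j₀) with hEdef
    have hdisj : Disjoint E ((M.erase j₀).biUnion S) := by
      rw [Finset.disjoint_left]
      intro a ha hb
      rw [Finset.mem_biUnion] at hb
      obtain ⟨k, hk, hak⟩ := hb
      exact key a ha k hk hak
    have hsubU : E ∪ (M.erase j₀).biUnion S ⊆ M.biUnion S := by
      apply Finset.union_subset
      · intro a ha
        rw [Finset.mem_biUnion]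
        exact ⟨j₀, hj₀M, Finset.mem_of_mem_erase ha⟩
      · exact Finset.biUnion_subset_biUnion_of_subset_left _ (Finset.erase_subset _ _)
    have hcardU : E.card + ((M.erase j₀).biUnion S).card ≤ (M.biUnion S).card := by
      rw [← Finset.card_union_of_disjoint hdisj]
      exact Finset.card_le_card hsubU
    omega

lemma cerberus_shrink {n : ℕ} : ∀ (N : ℕ) (S : Fin (n - 3) → Finset (Fin n))
    (i : Fin (n - 3) → Fin n), (∀ j, i j ∈ S j) → CerberusCondition S →
    (∑ j, (S j).card ≤ N) →
    ∃ S'' : Fin (n - 3) → Finset (Fin n), (∀ j, i j ∈ S'' j) ∧ (∀ j, S'' j ⊆ S j) ∧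
      (∀ j, (S'' j).card ≤ 4) ∧ CerberusCondition S'' := by
  intro N
  induction N with
  | zero =>
    intro S i hi hC hN
    refine ⟨S, hi, fun j => Finset.Subset.refl _, fun j => ?_, hC⟩
    have h1 : (S j).card ≤ ∑ k, (S k).card :=
      Finset.single_le_sum (f := fun k => (S k).card) (fun k _ => Nat.zero_le _)
        (Finset.mem_univ j)
    omega
  | succ N ih =>
    intro S i hi hC hN
    by_cases h4 : ∀ j, (S j).card ≤ 4
    · exact ⟨S, hi, fun j => Finset.Subset.refl _, h4, hC⟩
    · push_neg at h4
      obtain ⟨j₀, hj₀⟩ := h4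
      obtain ⟨x, hx, hC'⟩ := exists_removable S i hi hC j₀ (by omega)
      set S₂ := Function.update S j₀ ((S j₀).erase x) with hS₂
      have hi₂ : ∀ j, i j ∈ S₂ j := by
        intro j
        by_cases hj : j = j₀
        · subst hj
          simp only [hS₂, Function.update_self]
          rw [Finset.mem_erase] at hx ⊢
          exact ⟨fun h => hx.1 h.symm, hi j⟩
        · simp only [hS₂, Function.update_of_ne hj]
          exact hi j
      have hsub₂ : ∀ j, S₂ j ⊆ S j := by
        intro j
        by_cases hj : j = j₀
        · subst hj
          simp only [hS₂, Function.update_self]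
          exact Finset.erase_subset _ _
        · simp only [hS₂, Function.update_of_ne hj]
          exact Finset.Subset.refl _
      have hsum : ∑ j, (S₂ j).card ≤ N := by
        have hx' : x ∈ S j₀ := Finset.mem_of_mem_erase hx
        have hc1 : ∑ j, (S₂ j).card
            = ((S j₀).erase x).card + ∑ j ∈ Finset.univ \ {j₀}, (S j).card := by
          rw [show (fun j => (S₂ j).card)
              = Function.update (fun k => (S k).card) j₀ ((S j₀).erase x).card from ?_]
          · exact Finset.sum_update_of_mem (Finset.mem_univ j₀) _ _
          · funext j
            by_cases hj : j = j₀
            · subst hj; simp [hS₂]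
            · simp [hS₂, Function.update_of_ne hj]
        have hc2 : ∑ j, (S j).card
            = (∑ j ∈ Finset.univ \ {j₀}, (S j).card) + (S j₀).card :=
          Finset.sum_eq_sum_sdiff_singleton_add (Finset.mem_univ j₀) _
        rw [Finset.card_erase_of_mem hx'] at hc1
        omega
      obtain ⟨S'', h1, h2, h3, h4⟩ := ih S₂ i hi₂ hC' hsum
      exact ⟨S'', h1, fun j => (h2 j).trans (hsub₂ j), h3, h4⟩

/-- If `S_1, …, S_{n-3}` satisfies the Cerberus condition and `i_j ∈ S_j` for all `j`, then
there are subsets `S'_j` with `i_j ∈ S'_j ⊆ S_j`, `|S'_j| = 4`, satisfying the Cerberus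
condition. -/
theorem cerberus_reduction_to_quadruples (n : ℕ) (hn : 4 ≤ n)
    (S : Fin (n - 3) → Finset (Fin n)) (i : Fin (n - 3) → Fin n)
    (hi : ∀ j, i j ∈ S j) (hC : CerberusCondition S) :
    ∃ S' : Fin (n - 3) → Finset (Fin n),
      (∀ j, i j ∈ S' j) ∧ (∀ j, S' j ⊆ S j) ∧ (∀ j, (S' j).card = 4) ∧
        CerberusCondition S' := by
  obtain ⟨S'', h1, h2, h3, h4⟩ :=
    cerberus_shrink (∑ j, (S j).card) S i hi hC le_rfl
  have hbig : ∀ j, 4 ≤ (S j).card := by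
    intro j
    have := hC {j} (Finset.singleton_nonempty j)
    simpa [Finset.singleton_biUnion] using this
  have hchoice : ∀ j, ∃ C : Finset (Fin n), S'' j ⊆ C ∧ C ⊆ S j ∧ C.card = 4 := by
    intro j
    obtain ⟨C, hC1, hC2, hC3⟩ := Finset.exists_subsuperset_card_eq (n := 4)
      (h2 j) (h3 j) (hbig j)
    refine ⟨C, hC1, hC2, ?_⟩
    have := h3 j
    omega
  choose S' hS'1 hS'2 hS'3 using hchoice
  exact ⟨S', fun j => hS'1 j (h1 j), hS'2, hS'3,
    cerberus_mono hS'1 h4⟩
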